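/- If a, b, c, d' are integers with P(a,b,c,d') = 0 such that ab+1, ac+1, bc+1, ad'+1, bd'+1, cd'+1 are all perfect squares, and d = 4abc + 2a + 2b + 2c - d', then ab+1, ac+1, bc+1, ad+1, bd+1, cd+1 are all perfect squares. -/
import Mathlib


def P (a b c d : ℤ) : ℤ := a^2 + b^2 + c^2 + d^2 - 2*a*b - 2*a*c - 2*a*d - 2*b*c - 2*b*d - 2*c*d - 4*a*b*c*d - 4

theorem stmt_11 (a b c d' : ℤ) (h : P a b c d' = 0)
    (h1 : IsSquare (a*b+1)) (h2 : IsSquare (a*c+1)) (h3 : IsSquare (b*c+1))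
    (h4 : IsSquare (a*d'+1)) (h5 : IsSquare (b*d'+1)) (h6 : IsSquare (c*d'+1)) :
    let d := 4*a*b*c + 2*a + 2*b + 2*c - d'
    IsSquare (a*b+1) ∧ IsSquare (a*c+1) ∧ IsSquare (b*c+1) ∧
    IsSquare (a*d+1) ∧ IsSquare (b*d+1) ∧ IsSquare (c*d+1) := by
  intro d
  obtain ⟨r, hr⟩ := h1
  obtain ⟨s, hs⟩ := h2
  obtain ⟨t, ht⟩ := h3
  simp only [P] at h
  have key : (a+b+c+2*a*b*c - d' - 2*r*s*t) * (a+b+c+2*a*b*c - d' + 2*r*s*t) = 0 := by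
    linear_combination h + 4*(a*c+1)*(b*c+1)*hr + 4*(r*r)*(b*c+1)*hs + 4*(r*r)*(s*s)*ht
  refine ⟨⟨r, hr⟩, ⟨s, hs⟩, ⟨t, ht⟩, ?_⟩
  rcases mul_eq_zero.mp key with hk | hk
  · have hd' : d' = a+b+c+2*a*b*c - 2*r*s*t := by linarith
    subst hd'
    refine ⟨⟨r*s+a*t, by linear_combination (a*c+1)*hr + (r*r)*hs + (a^2)*ht⟩,
            ⟨r*t+b*s, by linear_combination (b*c+1)*hr + (b^2)*hs + (r*r)*ht⟩,
            ⟨s*t+c*r, by linear_combination (c^2)*hr + (b*c+1)*hs + (s*s)*ht⟩⟩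
  · have hd' : d' = a+b+c+2*a*b*c + 2*r*s*t := by linarith
    subst hd'
    refine ⟨⟨r*s-a*t, by linear_combination (a*c+1)*hr + (r*r)*hs + (a^2)*ht⟩,
            ⟨r*t-b*s, by linear_combination (b*c+1)*hr + (b^2)*hs + (r*r)*ht⟩,
            ⟨s*t-c*r, by linear_combination (c^2)*hr + (b*c+1)*hs + (s*s)*ht⟩⟩
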